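/- Fix d > 0. The function k ↦ J_min(k, d) := (1/(2d²))·(d - sinh(kd)/(k·(cosh(kd) + sinh(kd)))) is positive and increasing in k on (0, ∞); for fixed k > 0, the function d ↦ J_min(k, d) is decreasing in d on (0, ∞). -/

import Mathlib

open Real Set

open Real Set

lemma aux0 (x : ℝ) : (1 - x) * Real.exp x ≤ 1 := by
  nlinarith [Real.add_one_le_exp (-x), Real.exp_pos x, Real.exp_pos (-x),
    (by rw [← Real.exp_add]; simp : Real.exp x * Real.exp (-x) = 1)]

-- ψ(x) = 2 + x - (2-x) e^x ≥ 0 on [0,∞)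
lemma aux1 (x : ℝ) (hx : 0 ≤ x) : (2 - x) * Real.exp x ≤ 2 + x := by
  have h : MonotoneOn (fun x : ℝ => 2 + x - (2 - x) * Real.exp x) (Set.Ici 0) := by
    apply monotoneOn_of_deriv_nonneg (convex_Ici 0)
    · fun_prop
    · fun_prop
    · intro y hy
      rw [interior_Ici] at hy
      have H : HasDerivAt (fun x : ℝ => 2 + x - (2 - x) * Real.exp x)
          ((0 + 1) - ((0 - 1) * Real.exp y + (2 - y) * Real.exp y)) y := by
        exact ((hasDerivAt_const y (2:ℝ)).add (hasDerivAt_id y)).sub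
          (((hasDerivAt_const y (2:ℝ)).sub (hasDerivAt_id y)).mul (Real.hasDerivAt_exp y))
      rw [H.deriv]
      have := aux0 y
      nlinarith
  have h0 : (fun x : ℝ => 2 + x - (2 - x) * Real.exp x) 0 ≤ _ := h (Set.self_mem_Ici) hx hx
  simp at h0
  nlinarith

lemma expneg (y : ℝ) : HasDerivAt (fun x : ℝ => Real.exp (-x)) (-Real.exp (-y)) y := by
  have := (Real.hasDerivAt_exp (-y)).comp y ((hasDerivAt_id y).neg)
  simpa [Function.comp_def] using this

lemma h_anti : AntitoneOn (fun x : ℝ => (1 - Real.exp (-x)) / x) (Set.Ioi 0) := by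
  apply antitoneOn_of_deriv_nonpos (convex_Ioi 0)
  · apply ContinuousOn.div (by fun_prop) continuousOn_id
    intro y hy; exact ne_of_gt hy
  · apply DifferentiableOn.div (by fun_prop) differentiableOn_id
    intro y hy; rw [interior_Ioi] at hy; exact ne_of_gt hy
  · intro y hy
    rw [interior_Ioi] at hy
    have hy0 : y ≠ 0 := ne_of_gt hy
    have H : HasDerivAt (fun x : ℝ => (1 - Real.exp (-x)) / x)
        (((0 - -Real.exp (-y)) * y - (1 - Real.exp (-y)) * 1) / y ^ 2) y :=
      (((hasDerivAt_const y (1:ℝ)).sub (expneg y)).div (hasDerivAt_id y) hy0)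
    rw [H.deriv]
    apply div_nonpos_of_nonpos_of_nonneg _ (sq_nonneg y)
    have h1 := aux0 y
    have h2 := Real.exp_pos (-y)
    have h3 : Real.exp y * Real.exp (-y) = 1 := by rw [← Real.exp_add]; simp
    -- (e^{-y})*y - (1 - e^{-y}) ≤ 0 ⟺ (y+1) e^{-y} ≤ 1 ⟸ y+1 ≤ e^y
    nlinarith [Real.add_one_le_exp y, Real.exp_pos y]

lemma phi_anti : AntitoneOn (fun x : ℝ => (x - 1 + Real.exp (-x)) / x ^ 2) (Set.Ioi 0) := by
  apply antitoneOn_of_deriv_nonpos (convex_Ioi 0)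
  · apply ContinuousOn.div (by fun_prop) (by fun_prop)
    intro y hy; have : (0:ℝ) < y := hy; positivity
  · apply DifferentiableOn.div (by fun_prop) (by fun_prop)
    intro y hy; rw [interior_Ioi] at hy; have : (0:ℝ) < y := hy; positivity
  · intro y hy
    rw [interior_Ioi] at hy
    have H : HasDerivAt (fun x : ℝ => (x - 1 + Real.exp (-x)) / x ^ 2)
        (((1 - 0 + -Real.exp (-y)) * y ^ 2 - (y - 1 + Real.exp (-y)) * (2 * y ^ 1)) / (y ^ 2) ^ 2) y := by
      apply HasDerivAt.div (((hasDerivAt_id y).sub (hasDerivAt_const y 1)).add (expneg y))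
        (hasDerivAt_pow 2 y) (by have : (0:ℝ) < y := hy; positivity)
    rw [H.deriv]
    apply div_nonpos_of_nonpos_of_nonneg _ (by positivity)
    -- numerator: y²(1 - e^{-y}) - 2y(y - 1 + e^{-y}) ≤ 0 ⟺ y(1-e^{-y}) ≤ 2(y-1+e^{-y})
    -- ⟺ (2-y) ≤ (2+y)e^{-y} ⟺ (2-y)e^y ≤ 2+y
    have h1 : (2 - y) * Real.exp y ≤ 2 + y := aux1 y hy.le
    have h3 : Real.exp y * Real.exp (-y) = 1 := by rw [← Real.exp_add]; simp
    have h2 : 2 - y ≤ (2 + y) * Real.exp (-y) := by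
      nlinarith [Real.exp_pos (-y), mul_le_mul_of_nonneg_right h1 (Real.exp_pos (-y)).le]
    nlinarith [mul_le_mul_of_nonneg_left h2 hy.le]

open Real Set

lemma Jrw1 (d k : ℝ) (hd : 0 < d) (hk : 0 < k) :
    (1 / (2 * d ^ 2)) * (d - Real.sinh (k * d) / (k * (Real.cosh (k * d) + Real.sinh (k * d)))) =
    (1 / (2 * d)) * (1 - (1 - Real.exp (-(2 * (k * d)))) / (2 * (k * d))) := by
  rw [Real.cosh_add_sinh, Real.sinh_eq,
    show -(2 * (k * d)) = -(k * d) + -(k * d) by ring, Real.exp_add, Real.exp_neg]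
  have e1 : Real.exp (k * d) ≠ 0 := Real.exp_ne_zero _
  field_simp

lemma Jrw2 (d k : ℝ) (hd : 0 < d) (hk : 0 < k) :
    (1 / (2 * d ^ 2)) * (d - Real.sinh (k * d) / (k * (Real.cosh (k * d) + Real.sinh (k * d)))) =
    k * ((2 * (k * d) - 1 + Real.exp (-(2 * (k * d)))) / (2 * (k * d)) ^ 2) := by
  rw [Real.cosh_add_sinh, Real.sinh_eq,
    show -(2 * (k * d)) = -(k * d) + -(k * d) by ring, Real.exp_add, Real.exp_neg]
  have e1 : Real.exp (k * d) ≠ 0 := Real.exp_ne_zero _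
  field_simp
  ring

lemma phi_pos (x : ℝ) (hx : 0 < x) : 0 < (x - 1 + Real.exp (-x)) / x ^ 2 := by
  apply div_pos _ (by positivity)
  nlinarith [Real.add_one_lt_exp (show -x ≠ 0 by linarith)]


theorem Jmin_properties :
    (∀ d : ℝ, 0 < d → ∀ k : ℝ, 0 < k →
      0 < (1 / (2 * d ^ 2)) *
        (d - Real.sinh (k * d) / (k * (Real.cosh (k * d) + Real.sinh (k * d))))) ∧
    (∀ d : ℝ, 0 < d →
      MonotoneOn (fun k : ℝ => (1 / (2 * d ^ 2)) *
        (d - Real.sinh (k * d) / (k * (Real.cosh (k * d) + Real.sinh (k * d)))))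
        (Set.Ioi 0)) ∧
    (∀ k : ℝ, 0 < k →
      AntitoneOn (fun d : ℝ => (1 / (2 * d ^ 2)) *
        (d - Real.sinh (k * d) / (k * (Real.cosh (k * d) + Real.sinh (k * d)))))
        (Set.Ioi 0)) := by
  refine ⟨?_, ?_, ?_⟩
  · intro d hd k hk
    rw [Jrw2 d k hd hk]
    exact mul_pos hk (phi_pos _ (by positivity))
  · intro d hd k1 hk1 k2 hk2 h12
    simp only
    rw [Jrw1 d k1 hd hk1, Jrw1 d k2 hd hk2]
    have hm1 : 2 * (k1 * d) ∈ Set.Ioi (0:ℝ) := by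
      simp only [Set.mem_Ioi] at *; positivity
    have hm2 : 2 * (k2 * d) ∈ Set.Ioi (0:ℝ) := by
      simp only [Set.mem_Ioi] at *
      have : (0:ℝ) < k2 := hk2
      positivity
    have key := h_anti hm1 hm2 (by simp only [Set.mem_Ioi] at hk1 hk2; nlinarith)
    simp only at key
    have h1d : (0:ℝ) < 1 / (2 * d) := by positivity
    apply mul_le_mul_of_nonneg_left _ h1d.le
    linarith
  · intro k hk d1 hd1 d2 hd2 h12
    simp only
    rw [Jrw2 d1 k hd1 hk, Jrw2 d2 k hd2 hk]
    have hm1 : 2 * (k * d1) ∈ Set.Ioi (0:ℝ) := by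
      simp only [Set.mem_Ioi] at *; positivity
    have hm2 : 2 * (k * d2) ∈ Set.Ioi (0:ℝ) := by
      simp only [Set.mem_Ioi] at *
      have : (0:ℝ) < d2 := hd2
      positivity
    have key := phi_anti hm1 hm2 (by simp only [Set.mem_Ioi] at hd1 hd2; nlinarith)
    simp only at key
    exact mul_le_mul_of_nonneg_left key hk.le
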